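/- (Seidenberg's Lemma) Let K be a field and I ⊆ K[x₁,…,xₙ] a zero-dimensional ideal. Suppose for every i ∈ {1,…,n} there exists a nonzero polynomial f_i ∈ I ∩ K[x_i] such that f_i and its derivative f_i' generate the unit ideal in K[x_i]. Then I is a radical ideal. -/

import Mathlib

/-- Seidenberg's Lemma: if `I ⊆ K[x₁,…,xₙ]` is zero-dimensional and for each variable
`xᵢ` the ideal contains a nonzero univariate polynomial `fᵢ(xᵢ)` with `fᵢ` coprime to
its derivative, then `I` is radical. -/
theorem stmt_4 {K : Type*} [Field K] (n : ℕ) (I : Ideal (MvPolynomial (Fin n) K))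
    (hdim : Module.Finite K (MvPolynomial (Fin n) K ⧸ I))
    (hf : ∀ i : Fin n, ∃ f : Polynomial K, f ≠ 0 ∧
      Polynomial.aeval (MvPolynomial.X i : MvPolynomial (Fin n) K) f ∈ I ∧
      IsCoprime f (Polynomial.derivative f)) :
    I.IsRadical := by
  rw [Ideal.isRadical_iff_quotient_reduced]
  set A := MvPolynomial (Fin n) K ⧸ I
  -- The Kähler differentials of A over K vanish
  have hD : (KaehlerDifferential.D K A) = 0 := by
    apply Derivation.ext_of_adjoin_eq_top
      (s := Set.range fun i : Fin n => (Ideal.Quotient.mk I (MvPolynomial.X i) : A))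
    · have hr : (Set.range fun i : Fin n => (Ideal.Quotient.mk I (MvPolynomial.X i) : A)) =
          (Ideal.Quotient.mkₐ K I : MvPolynomial (Fin n) K →ₐ[K] A) ''
            Set.range (MvPolynomial.X : Fin n → MvPolynomial (Fin n) K) := by
        rw [← Set.range_comp]
        rfl
      rw [hr, ← AlgHom.map_adjoin, MvPolynomial.adjoin_range_X,
        Algebra.map_top, AlgHom.range_eq_top]
      exact Ideal.Quotient.mkₐ_surjective K I
    · rintro _ ⟨i, rfl⟩
      obtain ⟨f, hf0, hfI, hcop⟩ := hf i
      set x : A := Ideal.Quotient.mk I (MvPolynomial.X i)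
      have hx : Polynomial.aeval x f = 0 := by
        have h1 : Polynomial.aeval ((Ideal.Quotient.mkₐ K I) (MvPolynomial.X i)) f =
            (Ideal.Quotient.mkₐ K I) (Polynomial.aeval (MvPolynomial.X i) f) :=
          Polynomial.aeval_algHom_apply _ _ _
        have h2 : x = (Ideal.Quotient.mkₐ K I) (MvPolynomial.X i) := rfl
        rw [h2, h1, Ideal.Quotient.mkₐ_eq_mk, Ideal.Quotient.eq_zero_iff_mem]
        exact hfI
      -- f'(x) is a unit in A
      obtain ⟨a, b, hab⟩ := hcop
      have hunit : IsUnit (Polynomial.aeval x (Polynomial.derivative f)) := by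
        refine IsUnit.of_mul_eq_one (Polynomial.aeval x b) ?_
        have := congrArg (Polynomial.aeval x) hab
        simp only [map_add, map_mul, map_one, hx, mul_zero, zero_add] at this
        rw [mul_comm] at this
        exact this
      -- chain rule: 0 = D (f(x)) = f'(x) • D x
      have hchain := (KaehlerDifferential.D K A).map_aeval f x
      rw [hx, map_zero] at hchain
      have := hchain.symm
      obtain ⟨u, hu⟩ := hunit
      have hzero : Polynomial.aeval x (Polynomial.derivative f) •
          (KaehlerDifferential.D K A) x = 0 := this
      have : (KaehlerDifferential.D K A) x = 0 := by
        have := congrArg (fun m => (↑u⁻¹ : A) • m) hzero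
        rw [← hu] at hzero
        exact u.isUnit.smul_eq_zero.mp hzero
      simpa using this
  have hsub : Subsingleton (Ω[A⁄K]) := by
    have hr : Set.range (⇑(KaehlerDifferential.D K A)) = {0} := by
      rw [hD]
      ext m
      simp
    have htop := KaehlerDifferential.span_range_derivation K A
    rw [hr, Submodule.span_zero_singleton] at htop
    refine subsingleton_of_forall_eq 0 fun m => ?_
    have : m ∈ (⊥ : Submodule A (Ω[A⁄K])) := htop ▸ Submodule.mem_top
    simpa using this
  have hFU : Algebra.FormallyUnramified K A := ⟨hsub⟩
  have hFT : Algebra.FiniteType K A := inferInstance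
  have hEFT : Algebra.EssFiniteType K A := Algebra.EssFiniteType.of_finiteType K A
  exact Algebra.FormallyUnramified.isReduced_of_field K A
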